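/- The 1CSP instance E = (10, 81, l) with unit demands and l = (4, 6, 6, 9, 16, 29, 32, 37, 40, 62) satisfies Δ_p(E) = 1; in particular, E is a proper non-IRUP instance with demand n = 10. -/

import Mathlib

open Finset
open scoped ENNReal NNReal

/-- A 1CSP instance with unit demands: `n` is a positive integer, the piece
lengths satisfy `0 < l 0 ≤ l 1 ≤ … ≤ l (n-1) ≤ L`. -/
def IsInstance (n : ℕ) (L : ℝ) (l : Fin n → ℝ) : Prop :=
  0 < n ∧ (∀ i, 0 < l i) ∧ (∀ i j : Fin n, i ≤ j → l i ≤ l j) ∧ (∀ i, l i ≤ L)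

/-- a binary (0/1) pattern -/
def IsBinary {n : ℕ} (a : Fin n → ℕ) : Prop := ∀ i, a i ≤ 1

/-- The set of feasible patterns `P^f(E)`. -/
def feasiblePatterns (n : ℕ) (L : ℝ) (l : Fin n → ℝ) : Set (Fin n → ℕ) :=
  {a | ∑ i, l i * (a i : ℝ) ≤ L}

/-- The set of proper patterns `P^p(E)` (for unit demands). -/
def properPatterns (n : ℕ) (L : ℝ) (l : Fin n → ℝ) : Set (Fin n → ℕ) :=
  {a | IsBinary a ∧ ∑ i, l i * (a i : ℝ) ≤ L}

/-- `z_D(P,E)`: minimum of `∑ x_a` over finitely supported `x : P → ℤ_{≥0}`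
with `∑ x_a • a = 𝟏`; (`⊤` if infeasible). -/
noncomputable def zD (n : ℕ) (P : Set (Fin n → ℕ)) : ℝ≥0∞ :=
  sInf {c : ℝ≥0∞ | ∃ x : (Fin n → ℕ) →₀ ℕ,
    (∀ a ∈ x.support, a ∈ P) ∧
    (∀ i, ∑ a ∈ x.support, x a * a i = 1) ∧
    c = ∑ a ∈ x.support, (x a : ℝ≥0∞)}

/-- `z_C(P,E)`: infimum of `∑ x_a` over finitely supported `x : P → ℝ_{≥0}`
with `∑ x_a • a = 𝟏`; (`⊤` if infeasible). -/
noncomputable def zC (n : ℕ) (P : Set (Fin n → ℕ)) : ℝ≥0∞ :=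
  sInf {c : ℝ≥0∞ | ∃ x : (Fin n → ℕ) →₀ NNReal,
    (∀ a ∈ x.support, a ∈ P) ∧
    (∀ i, ∑ a ∈ x.support, (x a : ℝ) * (a i : ℝ) = 1) ∧
    c = ∑ a ∈ x.support, (x a : ℝ≥0∞)}

noncomputable def zDf (n : ℕ) (L : ℝ) (l : Fin n → ℝ) : ℝ≥0∞ :=
  zD n (feasiblePatterns n L l)

noncomputable def zCf (n : ℕ) (L : ℝ) (l : Fin n → ℝ) : ℝ≥0∞ :=
  zC n (feasiblePatterns n L l)

noncomputable def zCp (n : ℕ) (L : ℝ) (l : Fin n → ℝ) : ℝ≥0∞ :=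
  zC n (properPatterns n L l)

/-- the gap `Δ(E) = z_D^f(E) - z_C^f(E)` -/
noncomputable def gap (n : ℕ) (L : ℝ) (l : Fin n → ℝ) : ℝ≥0∞ :=
  zDf n L l - zCf n L l

/-- the proper gap `Δ_p(E) = z_D^f(E) - z_C^p(E)` -/
noncomputable def properGap (n : ℕ) (L : ℝ) (l : Fin n → ℝ) : ℝ≥0∞ :=
  zDf n L l - zCp n L l

/-- the dominance relation `a ⪯ b`: all suffix sums of `a` are at most those of `b`. -/
def Dominates {n : ℕ} (a b : Fin n → ℕ) : Prop :=
  ∀ j : Fin n, ∑ i ∈ univ.filter (fun i => j ≤ i), a i ≤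
    ∑ i ∈ univ.filter (fun i => j ≤ i), b i

/-- the instance `E = (10, 81, (4,6,6,9,16,29,32,37,40,62))`
satisfies `Δ_p(E) = 1`; in particular it is a proper non-IRUP instance. -/

def ok : List ℕ → ℕ → ℕ → ℕ → Bool
  | [], _, _, _ => true
  | x :: xs, a, b, c =>
      (decide (x ≤ a) && ok xs (a - x) b c) ||
      (decide (x ≤ b) && ok xs a (b - x) c) ||
      (decide (x ≤ c) && ok xs a b (c - x))

def exceed : List (ℕ × ℕ) → ℕ → ℕ → Bool
  | [], _, need => decide (need = 0)
  | (l, w) :: xs, cap, need =>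
      exceed xs cap need || (decide (l ≤ cap) && exceed xs (cap - l) (need - w))

lemma ok_bridge : ∀ (n : ℕ) (l : Fin n → ℕ) (f : Fin n → Fin 3) (a b c : ℕ),
    (∑ i, if f i = 0 then l i else 0) ≤ a →
    (∑ i, if f i = 1 then l i else 0) ≤ b →
    (∑ i, if f i = 2 then l i else 0) ≤ c →
    ok (List.ofFn l) a b c = true := by
  intro n
  induction n with
  | zero => intro l f a b c _ _ _; simp [ok]
  | succ m IH =>
    intro l f a b c h0 h1 h2
    rw [Fin.sum_univ_succ] at h0 h1 h2
    rw [List.ofFn_succ]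
    simp only [ok, Bool.or_eq_true, Bool.and_eq_true, decide_eq_true_eq]
    have h3 : f 0 = 0 ∨ f 0 = 1 ∨ f 0 = 2 := by
      have : ∀ z : Fin 3, z = 0 ∨ z = 1 ∨ z = 2 := by decide
      exact this (f 0)
    rcases h3 with hf | hf | hf
    · rw [hf] at h0 h1 h2
      norm_num at h0 h1 h2
      refine Or.inl (Or.inl ⟨by omega, IH (fun i => l i.succ) (fun i => f i.succ) (a - l 0) b c ?_ ?_ ?_⟩)
      · show (∑ i : Fin m, if f i.succ = 0 then l i.succ else 0) ≤ a - l 0; omega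
      · show (∑ i : Fin m, if f i.succ = 1 then l i.succ else 0) ≤ b; omega
      · show (∑ i : Fin m, if f i.succ = 2 then l i.succ else 0) ≤ c; omega
    · rw [hf] at h0 h1 h2
      norm_num at h0 h1 h2
      refine Or.inl (Or.inr ⟨by omega, IH (fun i => l i.succ) (fun i => f i.succ) a (b - l 0) c ?_ ?_ ?_⟩)
      · show (∑ i : Fin m, if f i.succ = 0 then l i.succ else 0) ≤ a; omega
      · show (∑ i : Fin m, if f i.succ = 1 then l i.succ else 0) ≤ b - l 0; omega
      · show (∑ i : Fin m, if f i.succ = 2 then l i.succ else 0) ≤ c; omega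
    · rw [hf] at h0 h1 h2
      norm_num at h0 h1 h2
      refine Or.inr ⟨by omega, IH (fun i => l i.succ) (fun i => f i.succ) a b (c - l 0) ?_ ?_ ?_⟩
      · show (∑ i : Fin m, if f i.succ = 0 then l i.succ else 0) ≤ a; omega
      · show (∑ i : Fin m, if f i.succ = 1 then l i.succ else 0) ≤ b; omega
      · show (∑ i : Fin m, if f i.succ = 2 then l i.succ else 0) ≤ c - l 0; omega

lemma exceed_bridge : ∀ (n : ℕ) (l w : Fin n → ℕ) (b : Fin n → ℕ) (cap need : ℕ),
    (∀ i, b i ≤ 1) → (∑ i, l i * b i) ≤ cap → need ≤ ∑ i, w i * b i →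
    exceed (List.ofFn (fun i => (l i, w i))) cap need = true := by
  intro n
  induction n with
  | zero =>
    intro l w b cap need _ _ h2
    simp only [univ_eq_empty, sum_empty, Nat.le_zero] at h2
    simp [exceed, h2]
  | succ m IH =>
    intro l w b cap need hb h1 h2
    rw [Fin.sum_univ_succ] at h1 h2
    rw [List.ofFn_succ]
    simp only [exceed, Bool.or_eq_true, Bool.and_eq_true, decide_eq_true_eq]
    have hb0 : b 0 = 0 ∨ b 0 = 1 := by have := hb 0; omega
    rcases hb0 with hf | hf
    · rw [hf] at h1 h2
      simp only [Nat.mul_zero, Nat.zero_add] at h1 h2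
      refine Or.inl (IH (fun i => l i.succ) (fun i => w i.succ) (fun i => b i.succ) cap need
        (fun i => hb i.succ) ?_ ?_)
      · show (∑ i : Fin m, l i.succ * b i.succ) ≤ cap; omega
      · show need ≤ ∑ i : Fin m, w i.succ * b i.succ; omega
    · rw [hf] at h1 h2
      simp only [Nat.mul_one] at h1 h2
      refine Or.inr ⟨by omega, IH (fun i => l i.succ) (fun i => w i.succ) (fun i => b i.succ)
        (cap - l 0) (need - w 0) (fun i => hb i.succ) ?_ ?_⟩
      · show (∑ i : Fin m, l i.succ * b i.succ) ≤ cap - l 0; omega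
      · show need - w 0 ≤ ∑ i : Fin m, w i.succ * b i.succ; omega

def lN : Fin 10 → ℕ := ![4, 6, 6, 9, 16, 29, 32, 37, 40, 62]
def wN : Fin 10 → ℕ := ![0, 0, 0, 0, 0, 1, 1, 1, 1, 2]

lemma lR_eq : ∀ i : Fin 10, (![4, 6, 6, 9, 16, 29, 32, 37, 40, 62] : Fin 10 → ℝ) i = (lN i : ℝ) := by
  intro i; fin_cases i <;> norm_num [lN]

lemma lenR (a : Fin 10 → ℕ) :
    ∑ i, (![4, 6, 6, 9, 16, 29, 32, 37, 40, 62] : Fin 10 → ℝ) i * (a i : ℝ)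
      = ((∑ i, lN i * a i : ℕ) : ℝ) := by
  push_cast
  exact Finset.sum_congr rfl fun i _ => by rw [lR_eq i]

lemma lemA (f : Fin 10 → Fin 3) :
    ¬ ((∑ i, if f i = 0 then lN i else 0) ≤ 81 ∧
       (∑ i, if f i = 1 then lN i else 0) ≤ 81 ∧
       (∑ i, if f i = 2 then lN i else 0) ≤ 81) := by
  rintro ⟨h0, h1, h2⟩
  have htrue := ok_bridge 10 lN f 81 81 81 h0 h1 h2
  have hfalse : ok (List.ofFn lN) 81 81 81 = false := by decide
  rw [htrue] at hfalse
  simp at hfalse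

lemma lemB (b : Fin 10 → ℕ) (hb : ∀ i, b i ≤ 1) (h : ∑ i, lN i * b i ≤ 81) :
    ∑ i, wN i * b i ≤ 2 := by
  by_contra h3
  push_neg at h3
  have htrue := exceed_bridge 10 lN wN b 81 3 hb h h3
  have hfalse : exceed (List.ofFn (fun i => (lN i, wN i))) 81 3 = false := by decide
  rw [htrue] at hfalse
  simp at hfalse

def q4 : Fin 4 → (Fin 10 → ℕ) :=
  ![![0,0,0,0,1,0,0,0,0,1], ![1,0,0,0,0,0,0,1,1,0], ![0,0,1,1,0,1,1,0,0,0], ![0,1,0,0,0,0,0,0,0,0]]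

lemma q4_inj : Function.Injective q4 := by decide

noncomputable def xD : (Fin 10 → ℕ) →₀ ℕ :=
  Finsupp.embDomain ⟨q4, q4_inj⟩ (Finsupp.equivFunOnFinite.symm (fun _ => 1))

lemma xD_mem : ∀ a ∈ xD.support, a ∈ feasiblePatterns 10 81 ![4, 6, 6, 9, 16, 29, 32, 37, 40, 62] := by
  intro a ha
  rw [xD, Finsupp.support_embDomain, Finset.mem_map] at ha
  obtain ⟨k, -, hk⟩ := ha
  subst hk
  show ∑ i, _ ≤ (81:ℝ)
  fin_cases k <;>
    · simp [q4, Fin.sum_univ_succ]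
      norm_num

lemma xD_cover : ∀ i, ∑ a ∈ xD.support, xD a * a i = 1 := by
  intro i
  have : ∑ a ∈ xD.support, xD a * a i = xD.sum (fun a v => v * a i) := rfl
  rw [this, xD, Finsupp.sum_embDomain,
    Finsupp.sum_fintype _ _ (fun k => by simp)]
  simp only [Finsupp.coe_equivFunOnFinite_symm, Function.Embedding.coeFn_mk, one_mul]
  fin_cases i <;> decide

lemma xD_cost : (4:ℝ≥0∞) = ∑ a ∈ xD.support, (xD a : ℝ≥0∞) := by
  have : ∑ a ∈ xD.support, ((xD a : ℝ≥0∞)) = xD.sum (fun _ v => (v : ℝ≥0∞)) := rfl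
  rw [this, xD, Finsupp.sum_embDomain, Finsupp.sum_fintype _ _ (fun k => by simp)]
  simp [Fin.sum_univ_succ]

def p8 : Fin 8 → (Fin 10 → ℕ) :=
  ![![0,1,0,1,0,1,0,1,0,0], ![1,0,1,1,0,0,0,0,0,1], ![0,0,0,0,1,0,0,0,0,1],
    ![0,1,1,0,0,0,1,1,0,0], ![0,1,1,0,0,1,0,0,1,0], ![1,0,0,0,0,0,0,1,1,0],
    ![0,0,0,1,0,0,1,0,1,0], ![1,0,0,0,1,1,1,0,0,0]]

def vN : Fin 8 → ℕ := ![1, 1, 2, 1, 1, 1, 1, 1]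

lemma p8_inj : Function.Injective p8 := by decide
lemma p8_binary : ∀ k i, (p8 k) i ≤ 1 := by decide
lemma p8_len : ∀ k, ∑ i, lN i * (p8 k) i ≤ 81 := by decide
lemma p8_cover : ∀ i, ∑ k, vN k * (p8 k) i = 3 := by decide

noncomputable def vC : Fin 8 → ℝ≥0 := fun k => (vN k : ℝ≥0) / 3

noncomputable def xC : (Fin 10 → ℕ) →₀ ℝ≥0 :=
  Finsupp.embDomain ⟨p8, p8_inj⟩ (Finsupp.equivFunOnFinite.symm vC)

lemma xC_mem : ∀ a ∈ xC.support, a ∈ properPatterns 10 81 ![4, 6, 6, 9, 16, 29, 32, 37, 40, 62] := by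
  intro a ha
  rw [xC, Finsupp.support_embDomain, Finset.mem_map] at ha
  obtain ⟨k, -, hk⟩ := ha
  subst hk
  refine ⟨fun i => p8_binary k i, ?_⟩
  show ∑ i, _ ≤ (81:ℝ)
  rw [lenR]
  exact_mod_cast p8_len k

lemma xC_cover : ∀ i, ∑ a ∈ xC.support, (xC a : ℝ) * (a i : ℝ) = 1 := by
  intro i
  have h0 : ∑ a ∈ xC.support, (xC a : ℝ) * (a i : ℝ) = xC.sum (fun a v => (v:ℝ) * (a i : ℝ)) := rfl
  rw [h0, xC, Finsupp.sum_embDomain, Finsupp.sum_fintype _ _ (fun k => by simp)]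
  simp only [Finsupp.coe_equivFunOnFinite_symm, Function.Embedding.coeFn_mk]
  have : ∀ k : Fin 8, (vC k : ℝ) * ((p8 k) i : ℝ) = ((vN k * (p8 k) i : ℕ) : ℝ) / 3 := by
    intro k; simp [vC]; ring
  rw [Finset.sum_congr rfl fun k _ => this k, ← Finset.sum_div, ← Nat.cast_sum, p8_cover i]
  norm_num

lemma xC_cost : (3:ℝ≥0∞) = ∑ a ∈ xC.support, (xC a : ℝ≥0∞) := by
  have h0 : ∑ a ∈ xC.support, ((xC a : ℝ≥0∞)) = xC.sum (fun _ v => (v : ℝ≥0∞)) := rfl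
  rw [h0, xC, Finsupp.sum_embDomain, Finsupp.sum_fintype _ _ (fun k => by simp)]
  simp only [Finsupp.coe_equivFunOnFinite_symm]
  rw [show ∑ k : Fin 8, ((vC k : ℝ≥0∞)) = ((∑ k : Fin 8, vC k : ℝ≥0) : ℝ≥0∞) from (ENNReal.coe_finset_sum _ _).symm]
  have hsum : ∑ k : Fin 8, vC k = 3 := by
    have h1 : ∑ k : Fin 8, vC k = (∑ k : Fin 8, (vN k : ℝ≥0)) / 3 := by
      simp only [vC]
      rw [← Finset.sum_div]
    have h2 : ∑ k : Fin 8, (vN k : ℝ≥0) = 9 := by norm_num [vN, Fin.sum_univ_succ]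
    rw [h1, h2, div_eq_iff (by norm_num : (3:ℝ≥0) ≠ 0)]
    norm_num
  rw [hsum]
  norm_num

lemma zCp_lower (x : (Fin 10 → ℕ) →₀ ℝ≥0)
    (hsupp : ∀ a ∈ x.support, a ∈ properPatterns 10 81 ![4, 6, 6, 9, 16, 29, 32, 37, 40, 62])
    (hcover : ∀ i, ∑ a ∈ x.support, (x a : ℝ) * (a i : ℝ) = 1) :
    (3:ℝ≥0∞) ≤ ∑ a ∈ x.support, (x a : ℝ≥0∞) := by
  -- pattern weight bound
  have hpat : ∀ a ∈ x.support, ∑ i, (wN i : ℝ) * (a i : ℝ) ≤ 2 := by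
    intro a ha
    obtain ⟨hbin, hlen⟩ := hsupp a ha
    rw [lenR] at hlen
    have hlenN : ∑ i, lN i * a i ≤ 81 := by exact_mod_cast hlen
    have hw : ∑ i, wN i * a i ≤ 2 := lemB a hbin hlenN
    have : ∑ i, (wN i : ℝ) * (a i : ℝ) = ((∑ i, wN i * a i : ℕ) : ℝ) := by push_cast; ring
    rw [this]
    exact_mod_cast hw
  -- real chain
  have hreal : (3:ℝ) ≤ ∑ a ∈ x.support, (x a : ℝ) := by
    have h6 : (6:ℝ) = ∑ i : Fin 10, (wN i : ℝ) * (∑ a ∈ x.support, (x a : ℝ) * (a i : ℝ)) := by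
      rw [Finset.sum_congr rfl fun i _ => by rw [hcover i]]
      norm_num [wN, Fin.sum_univ_succ]
    have hswap : ∑ i : Fin 10, (wN i : ℝ) * (∑ a ∈ x.support, (x a : ℝ) * (a i : ℝ))
        = ∑ a ∈ x.support, (x a : ℝ) * (∑ i : Fin 10, (wN i : ℝ) * (a i : ℝ)) := by
      simp_rw [Finset.mul_sum]
      rw [Finset.sum_comm]
      exact Finset.sum_congr rfl fun a _ => Finset.sum_congr rfl fun i _ => by ring
    have hle : ∑ a ∈ x.support, (x a : ℝ) * (∑ i : Fin 10, (wN i : ℝ) * (a i : ℝ))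
        ≤ ∑ a ∈ x.support, (x a : ℝ) * 2 := by
      refine Finset.sum_le_sum fun a ha => ?_
      exact mul_le_mul_of_nonneg_left (hpat a ha) (x a).coe_nonneg
    rw [← Finset.sum_mul] at hle
    nlinarith [h6, hswap, hle]
  -- transfer to ℝ≥0∞
  have hN : (3:ℝ≥0) ≤ ∑ a ∈ x.support, x a := by
    rw [← NNReal.coe_le_coe]
    push_cast
    exact_mod_cast hreal
  calc (3:ℝ≥0∞) = ((3:ℝ≥0) : ℝ≥0∞) := by norm_num
    _ ≤ ((∑ a ∈ x.support, x a : ℝ≥0) : ℝ≥0∞) := ENNReal.coe_le_coe.mpr hN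
    _ = ∑ a ∈ x.support, (x a : ℝ≥0∞) := ENNReal.coe_finset_sum _ _

lemma zDf_lower (x : (Fin 10 → ℕ) →₀ ℕ)
    (hsupp : ∀ a ∈ x.support, a ∈ feasiblePatterns 10 81 ![4, 6, 6, 9, 16, 29, 32, 37, 40, 62])
    (hcover : ∀ i, ∑ a ∈ x.support, x a * a i = 1) :
    (4:ℝ≥0∞) ≤ ∑ a ∈ x.support, (x a : ℝ≥0∞) := by
  have hN : 4 ≤ ∑ a ∈ x.support, x a := by
    by_contra hlt
    push_neg at hlt
    have hle3 : ∑ a ∈ x.support, x a ≤ 3 := by omega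
    -- choose a covering pattern for each item
    have hex : ∀ i : Fin 10, ∃ a ∈ x.support, x a * a i ≠ 0 := by
      intro i
      apply Finset.exists_ne_zero_of_sum_ne_zero
      rw [hcover i]; exact one_ne_zero
    choose g hg1 hg2 using hex
    have hgi : ∀ i, 1 ≤ (g i) i := by
      intro i
      have := hg2 i
      rcases Nat.eq_zero_or_pos ((g i) i) with h | h
      · exact absurd (by rw [h, Nat.mul_zero]) this
      · exact h
    have hgx : ∀ i, 1 ≤ x (g i) := by
      intro i
      have := hg2 i
      rcases Nat.eq_zero_or_pos (x (g i)) with h | h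
      · exact absurd (by rw [h, Nat.zero_mul]) this
      · exact h
    -- the set of used patterns
    set T : Finset (Fin 10 → ℕ) := Finset.image g univ with hT
    have hTsub : T ⊆ x.support := by
      intro a ha
      rw [hT, Finset.mem_image] at ha
      obtain ⟨i, -, hi⟩ := ha
      exact hi ▸ hg1 i
    have hTcard : T.card ≤ 3 := by
      have h1 : T.card = ∑ a ∈ T, 1 := by rw [Finset.card_eq_sum_ones]
      have h2 : ∑ a ∈ T, 1 ≤ ∑ a ∈ T, x a := by
        refine Finset.sum_le_sum fun a ha => ?_
        rw [hT, Finset.mem_image] at ha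
        obtain ⟨i, -, hi⟩ := ha
        exact hi ▸ hgx i
      have h3 : ∑ a ∈ T, x a ≤ ∑ a ∈ x.support, x a :=
        Finset.sum_le_sum_of_subset hTsub
      omega
    -- build the 3-coloring
    have hmem : ∀ i, g i ∈ T := fun i => Finset.mem_image_of_mem g (mem_univ i)
    set f : Fin 10 → Fin 3 := fun i => Fin.castLE hTcard (T.equivFin ⟨g i, hmem i⟩) with hf
    have hff : ∀ i j, f i = f j ↔ g i = g j := by
      intro i j
      rw [hf]
      simp only []
      constructor
      · intro h
        have h1 := Fin.castLE_injective hTcard h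
        have h2 := T.equivFin.injective h1
        exact congrArg Subtype.val h2
      · intro h
        exact congrArg (Fin.castLE hTcard) (congrArg T.equivFin (Subtype.ext h))
    -- each fiber of g obeys the capacity bound
    have hbound : ∀ p ∈ x.support, (∑ i, if g i = p then lN i else 0) ≤ 81 := by
      intro p hp
      have hfeas : ∑ i, (![4, 6, 6, 9, 16, 29, 32, 37, 40, 62] : Fin 10 → ℝ) i * (p i : ℝ) ≤ 81 :=
        hsupp p hp
      rw [lenR] at hfeas
      have hlenN : ∑ i, lN i * p i ≤ 81 := by exact_mod_cast hfeas
      refine le_trans (Finset.sum_le_sum fun i _ => ?_) hlenN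
      by_cases hgp : g i = p
      · rw [if_pos hgp]
        have : 1 ≤ p i := hgp ▸ hgi i
        exact Nat.le_mul_of_pos_right _ this
      · rw [if_neg hgp]; exact Nat.zero_le _
    -- fibers of f obey the capacity bound
    have hfk : ∀ k : Fin 3, (∑ i, if f i = k then lN i else 0) ≤ 81 := by
      intro k
      by_cases hex2 : ∃ i₀, f i₀ = k
      · obtain ⟨i₀, hi₀⟩ := hex2
        calc ∑ i, (if f i = k then lN i else 0)
            = ∑ i, (if g i = g i₀ then lN i else 0) := by
              exact Finset.sum_congr rfl fun i _ =>
                if_congr (by rw [← hi₀, hff]) rfl rfl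
          _ ≤ 81 := hbound (g i₀) (hg1 i₀)
      · push_neg at hex2
        rw [Finset.sum_eq_zero fun i _ => if_neg (hex2 i)]
        omega
    exact lemA f ⟨hfk 0, hfk 1, hfk 2⟩
  calc (4:ℝ≥0∞) = ((4:ℕ) : ℝ≥0∞) := by norm_num
    _ ≤ ((∑ a ∈ x.support, x a : ℕ) : ℝ≥0∞) := by exact_mod_cast hN
    _ = ∑ a ∈ x.support, (x a : ℝ≥0∞) := Nat.cast_sum _ _

theorem stmt_16 :
    properGap 10 81 ![4, 6, 6, 9, 16, 29, 32, 37, 40, 62] = 1 ∧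
    1 ≤ properGap 10 81 ![4, 6, 6, 9, 16, 29, 32, 37, 40, 62] := by
  have hD : zDf 10 81 ![4, 6, 6, 9, 16, 29, 32, 37, 40, 62] = 4 := by
    rw [zDf, zD]
    refine le_antisymm (sInf_le ⟨xD, xD_mem, xD_cover, xD_cost⟩) (le_sInf ?_)
    rintro c ⟨x, h1, h2, h3⟩
    rw [h3]
    exact zDf_lower x h1 h2
  have hC : zCp 10 81 ![4, 6, 6, 9, 16, 29, 32, 37, 40, 62] = 3 := by
    rw [zCp, zC]
    refine le_antisymm (sInf_le ⟨xC, xC_mem, xC_cover, xC_cost⟩) (le_sInf ?_)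
    rintro c ⟨x, h1, h2, h3⟩
    rw [h3]
    exact zCp_lower x h1 h2
  have hgap : properGap 10 81 ![4, 6, 6, 9, 16, 29, 32, 37, 40, 62] = 1 := by
    rw [properGap, hD, hC]
    rw [show (4:ℝ≥0∞) = 1 + 3 from by norm_num]
    exact ENNReal.add_sub_cancel_right (by norm_num)
  exact ⟨hgap, hgap.ge⟩
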